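/- arXiv:1901.01594 — 5 statements merged into one kernel-verified Lean document; each statement's English description precedes it below -/
import Mathlib

section
/- Let A be a small category. The left Kan extension of the contravariant Yoneda embedding z_A : A ⥤ (A ⥤ Type)ᵒᵖ along the (covariant) Yoneda embedding y_A : A ⥤ (Aᵒᵖ ⥤ Type) is naturally isomorphic to the Isbell conjugation functor O_A sending a presheaf F to the copresheaf a ↦ Hom_{PSh(A)}(F, y_A a). -/
open CategoryTheory

universe u

variable (A : Type u) [SmallCategory A]

/-- The contravariant Yoneda embedding `z_A : A ⥤ (A ⥤ Type)ᵒᵖ`, `a ↦ A(a, -)`. -/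
def contraYoneda : A ⥤ (A ⥤ Type u)ᵒᵖ :=
  coyoneda.rightOp

/-- The Isbell conjugation functor `O_A : PSh(A) ⥤ (A ⥤ Type)ᵒᵖ`, sending a presheaf `F`
to the copresheaf `a ↦ Hom_{PSh(A)}(F, y_A a)`. -/
def isbellO : (Aᵒᵖ ⥤ Type u) ⥤ (A ⥤ Type u)ᵒᵖ :=
  (coyoneda ⋙ (Functor.whiskeringLeft A (Aᵒᵖ ⥤ Type u) (Type u)).obj yoneda).rightOp

open Limits in
/-- The Isbell conjugation functor preserves colimits. -/
lemma isbellO_preservesColimits : PreservesColimitsOfSize.{u, u} (isbellO A) := by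
  have : PreservesLimitsOfSize.{u, u}
      (coyoneda ⋙ (Functor.whiskeringLeft A (Aᵒᵖ ⥤ Type u) (Type u)).obj yoneda) := by
    apply preservesLimits_of_evaluation
    intro a
    exact preservesLimits_of_natIso (F := yoneda.obj (yoneda.obj a)) (Iso.refl _)
  exact preservesColimitsOfSize_rightOp _

/-- The canonical isomorphism `z_A ≅ y_A ⋙ O_A`, coming from the full faithfulness of the
Yoneda embedding. -/
noncomputable def isbellIso : contraYoneda A ≅ yoneda ⋙ isbellO A :=
  NatIso.ofComponents
    (fun a => (NatIso.ofComponents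
      (fun b => Equiv.toIso (Yoneda.fullyFaithful.homEquiv (X := a) (Y := b)).symm)
      (by intros; ext f; exact Yoneda.fullyFaithful.map_injective (by simp))).op)
    (by intros; apply Quiver.Hom.unop_inj; ext b f
        exact Yoneda.fullyFaithful.map_injective
          (by simp [Functor.FullyFaithful.homEquiv, contraYoneda, isbellO]; show yoneda.map (_ ≫ Yoneda.fullyFaithful.preimage f) = yoneda.map (Yoneda.fullyFaithful.preimage (_ ≫ f)); simp; exact congrArg _ (Yoneda.fullyFaithful.map_preimage f)))

/-- The left Kan extension of the contravariant Yoneda embedding `z_A` along the (covariant)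
Yoneda embedding `y_A` is the Isbell conjugation functor `O_A` (i.e. `O_A`, equipped with a
suitable canonical 2-cell, is a left Kan extension of `z_A` along `y_A`). -/
theorem isbellO_isLeftKanExtension_of_contraYoneda_along_yoneda :
    ∃ α : contraYoneda A ⟶ yoneda ⋙ isbellO A,
      (isbellO A).IsLeftKanExtension α := by
  have := isbellO_preservesColimits A
  let e' : contraYoneda A ≅ uliftYoneda.{u} ⋙ isbellO A :=
    isbellIso A ≪≫ Functor.isoWhiskerRight (uliftYonedaIsoYoneda.{u} (C := A)).symm _
  have h1 := Presheaf.isLeftKanExtension_of_preservesColimits.{0, u, u, u, u+1} (isbellO A) e'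
  let e : yoneda ⋙ 𝟭 (Aᵒᵖ ⥤ Type u) ≅ uliftYoneda.{u} :=
    Functor.rightUnitor _ ≪≫ (uliftYonedaIsoYoneda.{u} (C := A)).symm
  exact ⟨_, (Functor.isLeftKanExtension_iff_postcomp₁ (𝟭 (Aᵒᵖ ⥤ Type u)) e e'.hom).1 h1⟩
end

section
/- For a small category A, restriction along the Yoneda embedding, μ_A : (PSh(A)ᵒᵖ ⥤ Type) ⥤ PSh(A) given by Θ ↦ (a ↦ Θ(y_A a)), is right adjoint to the Yoneda extension of the Yoneda embedding; moreover μ_A has the Yoneda embedding of PSh(A) as a fully faithful right adjoint, with invertible counit: μ_A ∘ y_{PSh(A)} ≅ 1_{PSh(A)}, exhibiting an adjunction μ_A ⊣ y_{PSh(A)} (on small presheaves). Concretely: the counit map Θ(F) ⟶ Hom_{PSh(A)}(F, a ↦ Θ(y_A a)) induced by functoriality of Θ, together with the Yoneda isomorphism μ_A(y_{PSh(A)}(P)) ≅ P, satisfy the triangle identities for an adjunction μ_A ⊣ y_{PSh(A)}. -/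
open CategoryTheory

universe u

variable (A : Type u) [SmallCategory A]

/-- Restriction along the Yoneda embedding: `μ_A` sends a presheaf `Θ` on `PSh(A)` to the
presheaf `a ↦ Θ (y_A a)` on `A`. -/
def muA : ((Aᵒᵖ ⥤ Type u)ᵒᵖ ⥤ Type u) ⥤ (Aᵒᵖ ⥤ Type u) :=
  (Functor.whiskeringLeft Aᵒᵖ ((Aᵒᵖ ⥤ Type u)ᵒᵖ) (Type u)).obj yoneda.op

/-- The unit of the adjunction `muA ⊣ yoneda`. -/
def muAUnit : 𝟭 ((Aᵒᵖ ⥤ Type u)ᵒᵖ ⥤ Type u) ⟶ muA A ⋙ yoneda where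
  app Θ :=
    { app := fun F => TypeCat.ofHom fun x =>
        { app := fun a => TypeCat.ofHom fun s => Θ.map (yonedaEquiv.symm s).op x
          naturality := by
            intro a b f
            ext s
            dsimp [muA]
            rw [yonedaEquiv_symm_map, ← FunctorToTypes.map_comp_apply, ← op_comp] }
      naturality := by
        intro F G g
        ext x
        dsimp
        ext a s
        change Θ.map (yonedaEquiv.symm s).op (Θ.map g x) = Θ.map (yonedaEquiv.symm (g.unop.app a s)).op x
        rw [← yonedaEquiv_symm_naturality_right, op_comp, FunctorToTypes.map_comp_apply, Quiver.Hom.op_unop] }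
  naturality := by
    intro Θ Θ' τ
    ext F x
    dsimp
    ext a s
    dsimp [muA]
    exact (NatTrans.naturality_apply τ _ x).symm

/-- `μ_A` (restriction along the Yoneda embedding) is left adjoint to the Yoneda embedding
of `PSh(A)` into presheaves on `PSh(A)`, with invertible counit: the counit
`μ_A (y_{PSh(A)} P) ⟶ P` is the Yoneda isomorphism `(a ↦ Hom(y_A a, P)) ≅ P`. -/
theorem muA_adjoint_yonedaPSh_with_iso_counit :
    ∃ adj : muA A ⊣ (yoneda : (Aᵒᵖ ⥤ Type u) ⥤ ((Aᵒᵖ ⥤ Type u)ᵒᵖ ⥤ Type u)),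
      IsIso adj.counit := by
  refine ⟨Adjunction.mkOfUnitCounit
    { unit := muAUnit A
      counit := (curriedYonedaLemma' (C := A)).hom
      left_triangle := ?_
      right_triangle := ?_ }, ?_⟩
  · ext Θ a x
    dsimp [muA, muAUnit, curriedYonedaLemma']
    have h : yonedaEquiv.symm (𝟙 (Opposite.unop a)) = 𝟙 (yoneda.obj (Opposite.unop a)) := by
      rw [← yonedaEquiv_yoneda_map (𝟙 (Opposite.unop a)), Equiv.symm_apply_apply, CategoryTheory.Functor.map_id]
    change Θ.map (yonedaEquiv.symm (𝟙 (Opposite.unop a))).op x = x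
    rw [h, op_id]
    exact FunctorToTypes.map_id_apply Θ x
  · ext P F x
    dsimp [muA, muAUnit, curriedYonedaLemma']
    ext a s
    dsimp [yonedaEquiv]
    simp [FunctorToTypes.naturality]
  · dsimp [Adjunction.mkOfUnitCounit]
    exact Iso.isIso_hom _
end

section
/- If J : X ⥤ Y is a functor such that left Kan extension along J exists as a functor J_! : (X ⥤ Y) ⥤ (Y ⥤ Y) left adjoint to restriction J^*, then the operation F ◁ G := (J_! F) ⋙ G makes the functor category X ⥤ Y into a (left) skew-monoidal category with unit J: there are natural transformations γ_{F,G,H} : (F ◁ G) ◁ H ⟶ F ◁ (G ◁ H), λ_F : J ◁ F ⟶ F, ρ_F : F ⟶ F ◁ J satisfying the five skew-monoidal coherence axioms (skew pentagon, two skew unit triangles, the zig-zag λ_J ∘ ρ_J = 1_J, and the interpolated zig-zag (F ◁ λ_G) ∘ γ_{F,J,G} ∘ (ρ_F ◁ G) = 1_{F ◁ G}). -/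
open CategoryTheory
open Functor

universe v₁ v₂ u₁ u₂

namespace SkewKanAux

variable {X : Type u₁} [Category.{v₁} X] {Y : Type u₂} [Category.{v₂} Y]
  (J : X ⥤ Y) (Jl : (X ⥤ Y) ⥤ (Y ⥤ Y))
  (adj : Jl ⊣ (whiskeringLeft X Y Y).obj J)

/-- The core of the associator. -/
def δ (F G : X ⥤ Y) : Jl.obj (G ⋙ Jl.obj F) ⟶ Jl.obj G ⋙ Jl.obj F :=
  (adj.homEquiv (G ⋙ Jl.obj F) (Jl.obj G ⋙ Jl.obj F)).symm
    (whiskerRight (adj.unit.app G) (Jl.obj F))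

lemma adjunct_δ (F G : X ⥤ Y) :
    adj.unit.app (G ⋙ Jl.obj F) ≫ whiskerLeft J (δ J Jl adj F G) =
      whiskerRight (adj.unit.app G) (Jl.obj F) := by
  have h := (adj.homEquiv (G ⋙ Jl.obj F) (Jl.obj G ⋙ Jl.obj F)).apply_symm_apply
      (whiskerRight (adj.unit.app G) (Jl.obj F))
  rw [Adjunction.homEquiv_unit] at h
  exact h

lemma adjunct_δ_app (F G : X ⥤ Y) (x : X) :
    (adj.unit.app (G ⋙ Jl.obj F)).app x ≫ (δ J Jl adj F G).app (J.obj x) =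
      (Jl.obj F).map ((adj.unit.app G).app x) := by
  simpa using NatTrans.congr_app (adjunct_δ J Jl adj F G) x

lemma unit_nat {A B : X ⥤ Y} (t : A ⟶ B) :
    adj.unit.app A ≫ whiskerLeft J (Jl.map t) = t ≫ adj.unit.app B := by
  simpa using (adj.unit.naturality t).symm

lemma unit_nat_app {A B : X ⥤ Y} (t : A ⟶ B) (x : X) :
    (adj.unit.app A).app x ≫ (Jl.map t).app (J.obj x) =
      t.app x ≫ (adj.unit.app B).app x := by
  simpa using NatTrans.congr_app (unit_nat J Jl adj t) x

lemma hom_ext {K : X ⥤ Y} {M : Y ⥤ Y} {φ ψ : Jl.obj K ⟶ M}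
    (h : adj.unit.app K ≫ whiskerLeft J φ = adj.unit.app K ≫ whiskerLeft J ψ) :
    φ = ψ := by
  refine (adj.homEquiv K M).injective ?_
  simp only [Adjunction.homEquiv_unit]
  exact h

lemma right_tri (M : Y ⥤ Y) :
    adj.unit.app (J ⋙ M) ≫ whiskerLeft J (adj.counit.app M) = 𝟙 (J ⋙ M) := by
  simpa using adj.right_triangle_components M

lemma right_tri_app (M : Y ⥤ Y) (x : X) :
    (adj.unit.app (J ⋙ M)).app x ≫ (adj.counit.app M).app (J.obj x) = 𝟙 _ := by
  simpa using NatTrans.congr_app (right_tri J Jl adj M) x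


lemma δ_nat₁ {F F' : X ⥤ Y} (x : F ⟶ F') (G : X ⥤ Y) :
    Jl.map (whiskerLeft G (Jl.map x)) ≫ δ J Jl adj F' G =
      δ J Jl adj F G ≫ whiskerLeft (Jl.obj G) (Jl.map x) := by
  apply hom_ext J Jl adj
  ext x0
  simp only [whiskerLeft_comp, NatTrans.comp_app, whiskerLeft_app, Functor.comp_obj,
    Category.assoc]
  rw [← Category.assoc, unit_nat_app, Category.assoc, adjunct_δ_app,
    ← Category.assoc, adjunct_δ_app]
  exact ((Jl.map x).naturality ((adj.unit.app G).app x0)).symm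


lemma δ_nat₂ (F : X ⥤ Y) {G G' : X ⥤ Y} (y : G ⟶ G') :
    Jl.map (whiskerRight y (Jl.obj F)) ≫ δ J Jl adj F G' =
      δ J Jl adj F G ≫ whiskerRight (Jl.map y) (Jl.obj F) := by
  apply hom_ext J Jl adj
  ext x0
  simp only [whiskerLeft_comp, NatTrans.comp_app, whiskerLeft_app, whiskerRight_app,
    Functor.comp_obj, Category.assoc]
  rw [← Category.assoc, unit_nat_app, Category.assoc, adjunct_δ_app,
    ← Category.assoc, adjunct_δ_app]
  rw [whiskerRight_app, ← Functor.map_comp, ← Functor.map_comp, unit_nat_app]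

lemma δ_lam (F : X ⥤ Y) :
    δ J Jl adj J F ≫ whiskerLeft (Jl.obj F) (adj.counit.app (𝟭 Y)) =
      Jl.map (whiskerLeft F (adj.counit.app (𝟭 Y))) := by
  apply hom_ext J Jl adj
  ext x0
  simp only [whiskerLeft_comp, NatTrans.comp_app, whiskerLeft_app, Functor.comp_obj,
    Category.assoc]
  rw [← Category.assoc, adjunct_δ_app, unit_nat_app]
  exact (adj.counit.app (𝟭 Y)).naturality ((adj.unit.app F).app x0)

lemma δ_counit (F : X ⥤ Y) :
    δ J Jl adj F J ≫ whiskerRight (adj.counit.app (𝟭 Y)) (Jl.obj F) =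
      adj.counit.app (Jl.obj F) := by
  apply hom_ext J Jl adj
  ext x0
  simp only [whiskerLeft_comp, NatTrans.comp_app, whiskerLeft_app, whiskerRight_app,
    Functor.comp_obj, Category.assoc]
  rw [← Category.assoc, adjunct_δ_app, ← Functor.map_comp,
    show (adj.unit.app J).app x0 ≫ (adj.counit.app (𝟭 Y)).app (J.obj x0) = 𝟙 _ from
      right_tri_app J Jl adj (𝟭 Y) x0,
    CategoryTheory.Functor.map_id]
  exact (right_tri_app J Jl adj (Jl.obj F) x0).symm

lemma δ_zigzag (F : X ⥤ Y) :
    Jl.map (adj.unit.app F) ≫ δ J Jl adj F J ≫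
      whiskerRight (adj.counit.app (𝟭 Y)) (Jl.obj F) = 𝟙 (Jl.obj F) := by
  rw [δ_counit]
  exact adj.left_triangle_components F

lemma δ_pentagon (F G H : X ⥤ Y) :
    δ J Jl adj (G ⋙ Jl.obj F) H ≫ whiskerLeft (Jl.obj H) (δ J Jl adj F G) =
      Jl.map (whiskerLeft H (δ J Jl adj F G)) ≫ δ J Jl adj F (H ⋙ Jl.obj G) ≫
        whiskerRight (δ J Jl adj G H) (Jl.obj F) := by
  apply hom_ext J Jl adj
  ext x0
  simp only [whiskerLeft_comp, NatTrans.comp_app, whiskerLeft_app, whiskerRight_app,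
    Functor.comp_obj, Category.assoc]
  rw [← Category.assoc, adjunct_δ_app]
  rw [← Category.assoc, unit_nat_app, Category.assoc]
  rw [← Category.assoc ((adj.unit.app (H ⋙ Jl.obj G ⋙ Jl.obj F)).app x0),
    show (adj.unit.app (H ⋙ Jl.obj G ⋙ Jl.obj F)).app x0 ≫
        (δ J Jl adj F (H ⋙ Jl.obj G)).app (J.obj x0) =
        (Jl.obj F).map ((adj.unit.app (H ⋙ Jl.obj G)).app x0) from
      adjunct_δ_app J Jl adj F (H ⋙ Jl.obj G) x0,
    ← Functor.map_comp, adjunct_δ_app]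
  have := (δ J Jl adj F G).naturality ((adj.unit.app H).app x0)
  simp only [Functor.comp_map, Functor.comp_obj, whiskeringLeft_obj_obj,
    Functor.id_obj] at this
  rw [this]
  simp only [whiskerLeft_app, Functor.map_comp]

end SkewKanAux


/-- If left Kan extension along `J : X ⥤ Y` exists as a functor `J_!` left adjoint to
restriction `J^*`, then `F ◁ G := J_! F ⋙ G` (i.e. the composite `J_!F ⋅ G`, in Lean written
`G ⋙ J_!.obj F`) makes `X ⥤ Y` into a left skew-monoidal category with unit `J`: there are
natural families `γ`, `λ`, `ρ` satisfying the five skew-monoidal coherence axioms. -/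
theorem skew_monoidal_structure_on_functor_category
    {X : Type u₁} [Category.{v₁} X] {Y : Type u₂} [Category.{v₂} Y]
    (J : X ⥤ Y) (Jl : (X ⥤ Y) ⥤ (Y ⥤ Y))
    (adj : Jl ⊣ (Functor.whiskeringLeft X Y Y).obj J) :
    ∃ (γ : ∀ F G H : X ⥤ Y, (H ⋙ Jl.obj (G ⋙ Jl.obj F)) ⟶ ((H ⋙ Jl.obj G) ⋙ Jl.obj F))
      (lam : ∀ F : X ⥤ Y, (F ⋙ Jl.obj J) ⟶ F)
      (rho : ∀ F : X ⥤ Y, F ⟶ (J ⋙ Jl.obj F)),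
      -- naturality of `γ` in its first variable
      (∀ {F F' : X ⥤ Y} (x : F ⟶ F') (G H : X ⥤ Y),
        Functor.whiskerLeft H (Jl.map (Functor.whiskerLeft G (Jl.map x))) ≫ γ F' G H =
          γ F G H ≫ Functor.whiskerLeft (H ⋙ Jl.obj G) (Jl.map x)) ∧
      -- naturality of `γ` in its second variable
      (∀ (F : X ⥤ Y) {G G' : X ⥤ Y} (y : G ⟶ G') (H : X ⥤ Y),
        Functor.whiskerLeft H (Jl.map (Functor.whiskerRight y (Jl.obj F))) ≫ γ F G' H =
          γ F G H ≫ Functor.whiskerRight (Functor.whiskerLeft H (Jl.map y)) (Jl.obj F)) ∧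
      -- naturality of `γ` in its third variable
      (∀ (F G : X ⥤ Y) {H H' : X ⥤ Y} (z : H ⟶ H'),
        Functor.whiskerRight z (Jl.obj (G ⋙ Jl.obj F)) ≫ γ F G H' =
          γ F G H ≫ Functor.whiskerRight (Functor.whiskerRight z (Jl.obj G)) (Jl.obj F)) ∧
      -- naturality of `λ`
      (∀ {F F' : X ⥤ Y} (x : F ⟶ F'),
        Functor.whiskerRight x (Jl.obj J) ≫ lam F' = lam F ≫ x) ∧
      -- naturality of `ρ`
      (∀ {F F' : X ⥤ Y} (x : F ⟶ F'),
        x ≫ rho F' = rho F ≫ Functor.whiskerLeft J (Jl.map x)) ∧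
      -- (skm1) skew pentagon
      (∀ F G H K : X ⥤ Y,
        γ (G ⋙ Jl.obj F) H K ≫ γ F G (K ⋙ Jl.obj H) =
          Functor.whiskerLeft K (Jl.map (γ F G H)) ≫ γ F (H ⋙ Jl.obj G) K ≫
            Functor.whiskerRight (γ G H K) (Jl.obj F)) ∧
      -- (skm2, right unit triangle) `γ_{F,G,J} ∘ ρ_{F ◁ G} = F ◁ ρ_G`
      (∀ F G : X ⥤ Y,
        rho (G ⋙ Jl.obj F) ≫ γ F G J = Functor.whiskerRight (rho G) (Jl.obj F)) ∧
      -- (skm2, left unit triangle) `λ_{F ◁ G} ∘ γ_{J,F,G} = λ_F ◁ G`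
      (∀ F G : X ⥤ Y,
        γ J F G ≫ lam (G ⋙ Jl.obj F) = Functor.whiskerLeft G (Jl.map (lam F))) ∧
      -- (skm3) zig-zag identity `λ_J ∘ ρ_J = 1_J`
      (rho J ≫ lam J = 𝟙 J) ∧
      -- (skm4) interpolated zig-zag identity
      (∀ F G : X ⥤ Y,
        Functor.whiskerLeft G (Jl.map (rho F)) ≫ γ F J G ≫ Functor.whiskerRight (lam G) (Jl.obj F) =
          𝟙 (G ⋙ Jl.obj F)) := by
  refine ⟨fun F G H => whiskerLeft H (SkewKanAux.δ J Jl adj F G),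
    fun F => whiskerLeft F (adj.counit.app (𝟭 Y)),
    fun F => adj.unit.app F, ?_, ?_, ?_, ?_, ?_, ?_, ?_, ?_, ?_, ?_⟩
  · intro F F' x G H
    ext x0
    simpa using NatTrans.congr_app (SkewKanAux.δ_nat₁ J Jl adj x G) (H.obj x0)
  · intro F G G' y H
    ext x0
    simpa using NatTrans.congr_app (SkewKanAux.δ_nat₂ J Jl adj F y) (H.obj x0)
  · intro F G H H' z
    ext x0
    simpa using (SkewKanAux.δ J Jl adj F G).naturality (z.app x0)
  · intro F F' x
    ext x0
    simpa using (adj.counit.app (𝟭 Y)).naturality (x.app x0)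
  · intro F F' x
    exact (SkewKanAux.unit_nat J Jl adj x).symm
  · intro F G H K
    ext x0
    simpa using NatTrans.congr_app (SkewKanAux.δ_pentagon J Jl adj F G H) (K.obj x0)
  · intro F G
    exact SkewKanAux.adjunct_δ J Jl adj F G
  · intro F G
    ext x0
    simpa using NatTrans.congr_app (SkewKanAux.δ_lam J Jl adj F) (G.obj x0)
  · exact SkewKanAux.right_tri J Jl adj (𝟭 Y)
  · intro F G
    ext x0
    simpa using NatTrans.congr_app (SkewKanAux.δ_zigzag J Jl adj F) (G.obj x0)
end

section
/- The composition law of the Kleisli bicategory of a normal relative monad is associative: let T be a J-relative monad (a monoid for the skew structure ◁) with unit η : J ⟶ T and multiplication μ : T ◁ T ⟶ T, such that ρ_T : T ⟶ T ◁ J and λ_T : J ◁ T ⟶ T are invertible. Define composition of Kleisli 1-cells f : JX ⟶ TY, g : JY ⟶ TZ by g • f = μ_Z ∘ (T ◁ g) ∘ ρ_Y ∘ f. Then for f : JW ⟶ TZ', g : JZ' ⟶ TX, h : JX ⟶ TY, one has (h • g) • f = h • (g • f), and η is a two-sided unit: η_Y • f = f and f • η_X = f. -/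
open CategoryTheory

universe v₁ v₂ u₁ u₂

variable {C : Type u₁} [Category.{v₁} C] {D : Type u₂} [Category.{v₂} D]

/-- The associator-component `γ̃_{F,G} ∗ H` of the skew-monoidal structure
`F ◁ G = J_!F ⋅ G` on `C ⥤ D`, obtained as the mate of `J_!F ∗ η_G` under `J_! ⊣ J^*`. -/
noncomputable def skewGamma (J : C ⥤ D) (Jl : (C ⥤ D) ⥤ (D ⥤ D))
    (adj : Jl ⊣ (Functor.whiskeringLeft C D D).obj J) (F G H : C ⥤ D) :
    (H ⋙ Jl.obj (G ⋙ Jl.obj F)) ⟶ ((H ⋙ Jl.obj G) ⋙ Jl.obj F) :=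
  Functor.whiskerLeft H ((adj.homEquiv (G ⋙ Jl.obj F) (Jl.obj G ⋙ Jl.obj F)).symm
    (Functor.whiskerRight (adj.unit.app G) (Jl.obj F)))

/-- The Kleisli composition of a normal `J`-relative monad `T`:
for `f : JX ⟶ TY` and `g : JY ⟶ TZ`, `g • f := μ_Z ∘ (T ◁ g) ∘ ρ_Y ∘ f`. -/
def kleisliComp (J : C ⥤ D) (Jl : (C ⥤ D) ⥤ (D ⥤ D))
    (adj : Jl ⊣ (Functor.whiskeringLeft C D D).obj J) (T : C ⥤ D)
    (μ : (T ⋙ Jl.obj T) ⟶ T) {Xo Yo Zo : C}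
    (g : J.obj Yo ⟶ T.obj Zo) (f : J.obj Xo ⟶ T.obj Yo) : J.obj Xo ⟶ T.obj Zo :=
  f ≫ (adj.unit.app T).app Yo ≫ (Jl.obj T).map g ≫ μ.app Zo

/-- The Kleisli bicategory of a normal relative monad is unital and associative: if
`T : C ⥤ D` is a `J`-relative monad (a `◁`-monoid with unit `η : J ⟶ T` and multiplication
`μ : T ◁ T ⟶ T`, satisfying the skew unit laws and skew associativity) whose unitors
`ρ_T` and `λ_T` are invertible, then the Kleisli composition `g • f = μ ∘ (T ◁ g) ∘ ρ ∘ f`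
is associative and has the components of `η` as two-sided identities. -/
theorem kleisli_bicategory_of_normal_relative_monad
    (J : C ⥤ D) (Jl : (C ⥤ D) ⥤ (D ⥤ D))
    (adj : Jl ⊣ (Functor.whiskeringLeft C D D).obj J)
    (T : C ⥤ D) (η : J ⟶ T) (μ : (T ⋙ Jl.obj T) ⟶ T)
    -- skew unit law: `μ ∘ (η ◁ T) = λ_T`
    (unit_left : Functor.whiskerLeft T (Jl.map η) ≫ μ = Functor.whiskerLeft T (adj.counit.app (𝟭 D)))
    -- skew unit law: `μ ∘ (T ◁ η) ∘ ρ_T = 1_T`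
    (unit_right : adj.unit.app T ≫ Functor.whiskerRight η (Jl.obj T) ≫ μ = 𝟙 T)
    -- skew associativity: `μ ∘ (T ◁ μ) ∘ γ = μ ∘ (μ ◁ T)`
    (assoc_law : skewGamma J Jl adj T T T ≫ Functor.whiskerRight μ (Jl.obj T) ≫ μ =
      Functor.whiskerLeft T (Jl.map μ) ≫ μ)
    -- normality: `ρ_T` and `λ_T` are invertible
    (hrho : IsIso (adj.unit.app T))
    (hlam : IsIso (Functor.whiskerLeft T (adj.counit.app (𝟭 D)))) :
    (∀ (Xo Yo : C) (f : J.obj Xo ⟶ T.obj Yo),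
      kleisliComp J Jl adj T μ (η.app Yo) f = f) ∧
    (∀ (Xo Yo : C) (f : J.obj Xo ⟶ T.obj Yo),
      kleisliComp J Jl adj T μ f (η.app Xo) = f) ∧
    (∀ (W Z' Xo Yo : C) (f : J.obj W ⟶ T.obj Z') (g : J.obj Z' ⟶ T.obj Xo)
      (h : J.obj Xo ⟶ T.obj Yo),
      kleisliComp J Jl adj T μ (kleisliComp J Jl adj T μ h g) f =
        kleisliComp J Jl adj T μ h (kleisliComp J Jl adj T μ g f)) := by
  classical
  let Q := Jl.obj T
  refine ⟨?_, ?_, ?_⟩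
  · intro Xo Yo f
    have h1 : (adj.unit.app T).app Yo ≫ (Jl.obj T).map (η.app Yo) ≫ μ.app Yo
        = 𝟙 (T.obj Yo) := NatTrans.congr_app unit_right Yo
    simp [kleisliComp, h1]
  · intro Xo Yo f
    have h1 : η.app Xo ≫ (adj.unit.app T).app Xo
        = (adj.unit.app J).app Xo ≫ (Jl.map η).app (J.obj Xo) :=
      NatTrans.congr_app (adj.unit.naturality η) Xo
    have h2 : (Jl.map η).app (J.obj Xo) ≫ (Jl.obj T).map f
        = (Jl.obj J).map f ≫ (Jl.map η).app (T.obj Yo) :=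
      ((Jl.map η).naturality f).symm
    have h3 : (Jl.map η).app (T.obj Yo) ≫ μ.app Yo
        = (adj.counit.app (𝟭 D)).app (T.obj Yo) :=
      NatTrans.congr_app unit_left Yo
    have h4 : (Jl.obj J).map f ≫ (adj.counit.app (𝟭 D)).app (T.obj Yo)
        = (adj.counit.app (𝟭 D)).app (J.obj Xo) ≫ f :=
      (adj.counit.app (𝟭 D)).naturality f
    have h5 : (adj.unit.app J).app Xo ≫ (adj.counit.app (𝟭 D)).app (J.obj Xo)
        = 𝟙 (J.obj Xo) :=
      NatTrans.congr_app (adj.right_triangle_components (𝟭 D)) Xo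
    calc η.app Xo ≫ (adj.unit.app T).app Xo ≫ (Jl.obj T).map f ≫ μ.app Yo
        = (η.app Xo ≫ (adj.unit.app T).app Xo) ≫ (Jl.obj T).map f ≫ μ.app Yo := by
          simp
      _ = (adj.unit.app J).app Xo ≫ ((Jl.map η).app (J.obj Xo) ≫ (Jl.obj T).map f)
            ≫ μ.app Yo := by rw [h1]; simp
      _ = (adj.unit.app J).app Xo ≫ (Jl.obj J).map f
            ≫ (Jl.map η).app (T.obj Yo) ≫ μ.app Yo := by rw [h2]; simp
      _ = (adj.unit.app J).app Xo ≫ (Jl.obj J).map f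
            ≫ (adj.counit.app (𝟭 D)).app (T.obj Yo) := by rw [h3]
      _ = ((adj.unit.app J).app Xo ≫ (adj.counit.app (𝟭 D)).app (J.obj Xo)) ≫ f := by
          rw [← Category.assoc, Category.assoc, h4]; simp
      _ = f := by rw [h5]; simp
  · intro W Z' Xo Yo f g h
    -- the mate defining the associator
    set φ : T ⋙ Jl.obj T ⟶ (J ⋙ Jl.obj T) ⋙ Jl.obj T :=
      Functor.whiskerRight (adj.unit.app T) (Jl.obj T) with hφ
    set σ : Jl.obj (T ⋙ Jl.obj T) ⟶ Jl.obj T ⋙ Jl.obj T :=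
      (adj.homEquiv (T ⋙ Jl.obj T) (Jl.obj T ⋙ Jl.obj T)).symm φ with hσ
    -- the key "module" law for extensions
    have key : ∀ (A B : C) (k : J.obj A ⟶ T.obj B),
        (Jl.obj T).map ((adj.unit.app T).app A) ≫ (Jl.obj T).map ((Jl.obj T).map k)
            ≫ (Jl.obj T).map (μ.app B) ≫ μ.app B
          = μ.app A ≫ (adj.unit.app T).app A ≫ (Jl.obj T).map k ≫ μ.app B := by
      intro A B k
      -- transpose property of σ
      have hσ' : adj.unit.app (T ⋙ Jl.obj T) ≫ Functor.whiskerLeft J σ = φ := by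
        have := (adj.homEquiv (T ⋙ Jl.obj T) (Jl.obj T ⋙ Jl.obj T)).apply_symm_apply φ
        rw [hσ]
        rw [Adjunction.homEquiv_unit] at this
        exact this
      have t1 : (adj.unit.app (T ⋙ Jl.obj T)).app A ≫ σ.app (J.obj A)
          = (Jl.obj T).map ((adj.unit.app T).app A) := NatTrans.congr_app hσ' A
      -- naturality of σ at k
      have t2 : (Jl.obj (T ⋙ Jl.obj T)).map k ≫ σ.app (T.obj B)
          = σ.app (J.obj A) ≫ (Jl.obj T).map ((Jl.obj T).map k) := σ.naturality k
      -- components of the associativity law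
      have t3 : σ.app (T.obj B) ≫ (Jl.obj T).map (μ.app B) ≫ μ.app B
          = (Jl.map μ).app (T.obj B) ≫ μ.app B := by
        have := NatTrans.congr_app assoc_law B
        simpa [skewGamma, hσ, hφ] using this
      -- naturality of `Jl.map μ` at k
      have t4 : (Jl.obj (T ⋙ Jl.obj T)).map k ≫ (Jl.map μ).app (T.obj B)
          = (Jl.map μ).app (J.obj A) ≫ (Jl.obj T).map k := (Jl.map μ).naturality k
      -- naturality of the unit at μ
      have t5 : μ.app A ≫ (adj.unit.app T).app A
          = (adj.unit.app (T ⋙ Jl.obj T)).app A ≫ (Jl.map μ).app (J.obj A) :=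
        NatTrans.congr_app (adj.unit.naturality μ) A
      calc (Jl.obj T).map ((adj.unit.app T).app A) ≫ (Jl.obj T).map ((Jl.obj T).map k)
              ≫ (Jl.obj T).map (μ.app B) ≫ μ.app B
          = ((adj.unit.app (T ⋙ Jl.obj T)).app A ≫ σ.app (J.obj A))
              ≫ (Jl.obj T).map ((Jl.obj T).map k) ≫ (Jl.obj T).map (μ.app B) ≫ μ.app B := by
            rw [t1]
        _ = (adj.unit.app (T ⋙ Jl.obj T)).app A
              ≫ ((Jl.obj (T ⋙ Jl.obj T)).map k ≫ σ.app (T.obj B))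
              ≫ (Jl.obj T).map (μ.app B) ≫ μ.app B := by rw [t2]; simp
        _ = (adj.unit.app (T ⋙ Jl.obj T)).app A
              ≫ (Jl.obj (T ⋙ Jl.obj T)).map k
              ≫ (Jl.map μ).app (T.obj B) ≫ μ.app B := by rw [← t3]; simp
        _ = (adj.unit.app (T ⋙ Jl.obj T)).app A
              ≫ (Jl.map μ).app (J.obj A) ≫ (Jl.obj T).map k ≫ μ.app B := by
            rw [← Category.assoc ((Jl.obj (T ⋙ Jl.obj T)).map k), t4]; simp
        _ = (μ.app A ≫ (adj.unit.app T).app A) ≫ (Jl.obj T).map k ≫ μ.app B := by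
            rw [t5]; simp
        _ = μ.app A ≫ (adj.unit.app T).app A ≫ (Jl.obj T).map k ≫ μ.app B := by simp
    -- now associativity
    simp only [kleisliComp]
    rw [Functor.map_comp, Functor.map_comp, Functor.map_comp]
    simp only [Category.assoc]
    rw [key Xo Yo h]
end

section
/- Lax idempotency of the presheaf construction: for a small category A, there is an adjunction μ_A ⊣ y_{PSh(A)} with invertible counit, where μ_A : PSh_s(PSh(A)) ⥤ PSh(A) is restriction along y_A and y_{PSh(A)} : PSh(A) ⥤ PSh_s(PSh(A)) is the Yoneda embedding. The counit μ_A(y_{PSh(A)}(F)) ⟶ F is the Yoneda isomorphism a ↦ Hom(y_A a, F) ≅ F a, and the unit at Θ is the canonical map Θ(F) ⟶ Hom_{PSh(A)}(F, a ↦ Θ(y_A a)) induced by the action of Θ on morphisms. -/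
open CategoryTheory

universe u

variable (A : Type u) [SmallCategory A]

open Opposite
def adjFwd (Θ : (Aᵒᵖ ⥤ Type u)ᵒᵖ ⥤ Type u) (F : Aᵒᵖ ⥤ Type u)
    (α : (muA A).obj Θ ⟶ F) : Θ ⟶ yoneda.obj F where
  app G := TypeCat.ofHom fun x =>
    { app := fun a => TypeCat.ofHom fun g => α.app a (Θ.map (yonedaEquiv.symm g).op x)
      naturality := by
        intro a b f
        ext g
        dsimp
        rw [yonedaEquiv_symm_map, op_comp, FunctorToTypes.map_comp_apply]
        exact ConcreteCategory.congr_hom (α.naturality f) _ }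
  naturality := by
    intro G H f
    ext x : 2
    dsimp
    ext a g
    dsimp
    rw [← FunctorToTypes.map_comp_apply]
    erw [← yonedaEquiv_symm_naturality_right]
    rfl

def adjBwd (Θ : (Aᵒᵖ ⥤ Type u)ᵒᵖ ⥤ Type u) (F : Aᵒᵖ ⥤ Type u)
    (β : Θ ⟶ yoneda.obj F) : (muA A).obj Θ ⟶ F where
  app a := TypeCat.ofHom fun x => yonedaEquiv (β.app (op (yoneda.obj a.unop)) x)
  naturality := by
    intro a b f
    ext x
    dsimp [muA]
    show yonedaEquiv (β.app _ (Θ.map (yoneda.map f.unop).op x)) = F.map f (yonedaEquiv (β.app _ x))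
    erw [NatTrans.naturality_apply β (yoneda.map f.unop).op x, ← yonedaEquiv_naturality']

def adjA : muA A ⊣ (yoneda : (Aᵒᵖ ⥤ Type u) ⥤ ((Aᵒᵖ ⥤ Type u)ᵒᵖ ⥤ Type u)) :=
  Adjunction.mkOfHomEquiv
    { homEquiv := fun Θ F =>
        { toFun := adjFwd A Θ F
          invFun := adjBwd A Θ F
          left_inv := by
            intro α
            ext a x
            dsimp [adjFwd, adjBwd]
            rw [yonedaEquiv_apply]
            dsimp
            have : (yonedaEquiv.symm (𝟙 a.unop) : yoneda.obj a.unop ⟶ _) = 𝟙 _ := by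
              rw [Equiv.symm_apply_eq, yonedaEquiv_apply]
              rfl
            erw [this]
            simp
            rfl
          right_inv := by
            intro β
            ext G x
            dsimp [adjFwd, adjBwd]
            ext a g
            dsimp
            erw [NatTrans.naturality_apply β (yonedaEquiv.symm g).op x]
            dsimp
            rw [yonedaEquiv_comp]
            simp }
      homEquiv_naturality_left_symm := by intros; rfl
      homEquiv_naturality_right := by intros; rfl }


/-- Lax idempotency of the presheaf construction: there is an adjunction
`μ_A ⊣ y_{PSh(A)}` with invertible counit, where `μ_A` is restriction along `y_A` and
`y_{PSh(A)}` is the Yoneda embedding of `PSh(A)`; the counit `μ_A (y_{PSh(A)} F) ⟶ F` is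
the Yoneda isomorphism `(a ↦ Hom(y_A a, F)) ≅ F`, and the unit at `Θ` is the canonical map
`Θ(F) ⟶ Hom(F, a ↦ Θ(y_A a))` induced by the action of `Θ` on morphisms. -/
theorem presheaf_construction_lax_idempotent :
    ∃ adj : muA A ⊣ (yoneda : (Aᵒᵖ ⥤ Type u) ⥤ ((Aᵒᵖ ⥤ Type u)ᵒᵖ ⥤ Type u)),
      IsIso adj.counit := by
  refine ⟨adjA A, ?_⟩
  have h1 : ∀ (F : Aᵒᵖ ⥤ Type u) (a : Aᵒᵖ), IsIso (((adjA A).counit.app F).app a) := by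
    intro F a
    rw [isIso_iff_bijective]
    exact yonedaEquiv.bijective
  have h2 : ∀ F, IsIso ((adjA A).counit.app F) := fun F => NatIso.isIso_of_isIso_app _
  exact NatIso.isIso_of_isIso_app _
end
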